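/- Let λ : [0,∞) → (0,∞) be a nonincreasing, right-continuous function with lim_{s→∞} λ(s) = 0, and define its generalized inverse μ(t) := inf{s ≥ 0 : λ(s) ≤ t} for t > 0 (so μ(t) < ∞ for every t > 0 and μ(t) → ∞ as t → 0⁺). Then liminf_{t→0⁺} (log μ(t))/(log(1/t)) = ( limsup_{s→∞} (log λ(s))/(log(1/s)) )⁻¹, where both sides may take the values 0 and ∞ with the conventions 0⁻¹ = ∞ and ∞⁻¹ = 0. -/

import Mathlib

open Filter Set

/-- The inverse on `EReal` with the conventions `0⁻¹ = ∞` and `∞⁻¹ = 0`. -/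
noncomputable def einv (x : EReal) : EReal :=
  if x = 0 then ⊤ else if x = ⊤ then 0 else ((x.toReal)⁻¹ : ℝ)

private noncomputable def Gr (lam : ℝ → ℝ) (s : ℝ) : ℝ :=
  (Real.log (1 / s))⁻¹ * Real.log (lam s)

private noncomputable def Fr (lam : ℝ → ℝ) (t : ℝ) : ℝ :=
  (Real.log (1 / t))⁻¹ * Real.log (sInf {s : ℝ | 0 ≤ s ∧ lam s ≤ t})

private lemma aux_ne (lam : ℝ → ℝ) (hlim : Filter.Tendsto lam Filter.atTop (nhds 0))
    {t : ℝ} (ht : 0 < t) : {s : ℝ | 0 ≤ s ∧ lam s ≤ t}.Nonempty := by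
  obtain ⟨s, h1, h2⟩ := ((hlim.eventually_lt_const ht).and (eventually_ge_atTop (0:ℝ))).exists
  exact ⟨s, h2, h1.le⟩

private lemma aux_up (lam : ℝ → ℝ) (hpos : ∀ s : ℝ, 0 ≤ s → 0 < lam s)
    (hlim : Filter.Tendsto lam Filter.atTop (nhds 0)) {a : ℝ} (ha : 0 < a)
    (h : (a : EReal) < Filter.limsup (fun s => ((Gr lam s : ℝ) : EReal)) Filter.atTop) :
    Filter.liminf (fun t => ((Fr lam t : ℝ) : EReal)) (nhdsWithin (0:ℝ) (Set.Ioi 0))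
      ≤ ((1/a : ℝ) : EReal) := by
  refine liminf_le_of_frequently_le ?_ (by isBoundedDefault)
  rw [(nhdsGT_basis (0:ℝ)).frequently_iff]
  intro ε hε
  have hfreq : ∃ᶠ s in atTop, (a : EReal) < ((Gr lam s : ℝ) : EReal) :=
    frequently_lt_of_lt_limsup (by isBoundedDefault) h
  obtain ⟨s, hGs, hs1, hlts⟩ :=
    (hfreq.and_eventually ((eventually_gt_atTop (1:ℝ)).and
      (hlim.eventually_lt_const hε))).exists
  rw [EReal.coe_lt_coe_iff] at hGs
  have hs0 : (0:ℝ) ≤ s := by linarith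
  have hlogs : 0 < Real.log s := Real.log_pos hs1
  have ht0 : 0 < lam s := hpos s hs0
  have hGs' : a < -(Real.log s)⁻¹ * Real.log (lam s) := by
    have : Real.log (1/s) = -Real.log s := by rw [one_div, Real.log_inv]
    rw [Gr, this, inv_neg] at hGs
    exact hGs
  have key : a * Real.log s < - Real.log (lam s) := by
    have h3 := mul_lt_mul_of_pos_right hGs' hlogs
    have h4 : (-(Real.log s)⁻¹ * Real.log (lam s)) * Real.log s = - Real.log (lam s) := by
      field_simp
    linarith [h4 ▸ h3]
  have hL : 0 < - Real.log (lam s) := lt_trans (mul_pos ha hlogs) key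
  -- mu (lam s) ≤ s
  set mu : ℝ := sInf {x : ℝ | 0 ≤ x ∧ lam x ≤ lam s} with hmu
  have hbdd : BddBelow {x : ℝ | 0 ≤ x ∧ lam x ≤ lam s} := ⟨0, fun x hx => hx.1⟩
  have hmu_le : mu ≤ s := csInf_le hbdd ⟨hs0, le_refl _⟩
  have hmu0 : 0 ≤ mu := le_csInf (aux_ne lam hlim ht0) (fun x hx => hx.1)
  have hlogmu_le : Real.log mu ≤ Real.log s := by
    rcases le_or_gt mu 1 with hc | hc
    · exact le_trans (Real.log_nonpos hmu0 hc) hlogs.le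
    · exact (Real.log_le_log_iff (lt_trans one_pos hc) (lt_trans one_pos hs1)).mpr hmu_le
  have hFr : Fr lam (lam s) ≤ 1 / a := by
    have hlog1t : Real.log (1 / lam s) = - Real.log (lam s) := by
      rw [one_div, Real.log_inv]
    rw [Fr, hlog1t, ← hmu]
    rcases le_or_gt (Real.log mu) 0 with hc | hc
    · have h1 : (- Real.log (lam s))⁻¹ * Real.log mu ≤ 0 :=
        mul_nonpos_iff.mpr (Or.inl ⟨(inv_nonneg.mpr hL.le), hc⟩)
      exact le_trans h1 (le_of_lt (one_div_pos.mpr ha))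
    · have h1 : (- Real.log (lam s))⁻¹ * Real.log mu
          ≤ (- Real.log (lam s))⁻¹ * Real.log s :=
        mul_le_mul_of_nonneg_left hlogmu_le (inv_nonneg.mpr hL.le)
      have h2 : (- Real.log (lam s))⁻¹ ≤ (a * Real.log s)⁻¹ :=
        inv_anti₀ (mul_pos ha hlogs) key.le
      have h3 : (- Real.log (lam s))⁻¹ * Real.log s ≤ (a * Real.log s)⁻¹ * Real.log s :=
        mul_le_mul_of_nonneg_right h2 hlogs.le
      have h4 : (a * Real.log s)⁻¹ * Real.log s = 1 / a := by
        field_simp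
      linarith
  exact ⟨lam s, ⟨ht0, hlts⟩, EReal.coe_le_coe_iff.mpr hFr⟩

private lemma aux_down (lam : ℝ → ℝ) (hpos : ∀ s : ℝ, 0 ≤ s → 0 < lam s)
    (hmono : AntitoneOn lam (Set.Ici 0))
    (hlim : Filter.Tendsto lam Filter.atTop (nhds 0)) {a : ℝ} (ha : 0 < a)
    (h : Filter.limsup (fun s => ((Gr lam s : ℝ) : EReal)) Filter.atTop < (a : EReal)) :
    ((1/a : ℝ) : EReal)
      ≤ Filter.liminf (fun t => ((Fr lam t : ℝ) : EReal)) (nhdsWithin (0:ℝ) (Set.Ioi 0)) := by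
  apply le_liminf_of_le (by isBoundedDefault)
  have hev : ∀ᶠ s in atTop, ((Gr lam s : ℝ) : EReal) < (a : EReal) :=
    eventually_lt_of_limsup_lt h
  obtain ⟨S, hS⟩ := eventually_atTop.mp (hev.and (eventually_gt_atTop (1:ℝ)))
  have hS1 : 1 < S := (hS S le_rfl).2
  have hS0 : (0:ℝ) ≤ S := by linarith
  have hPs : ∀ s, S ≤ s → Real.exp (-a * Real.log s) < lam s := by
    intro s hs
    have hs1 : 1 < s := lt_of_lt_of_le hS1 hs
    have hlogs : 0 < Real.log s := Real.log_pos hs1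
    have hgs : Gr lam s < a := EReal.coe_lt_coe_iff.mp (hS s hs).1
    have hgs' : -(Real.log s)⁻¹ * Real.log (lam s) < a := by
      have : Real.log (1/s) = -Real.log s := by rw [one_div, Real.log_inv]
      rw [Gr, this, inv_neg] at hgs
      exact hgs
    have hkey : -a * Real.log s < Real.log (lam s) := by
      have h3 := mul_lt_mul_of_pos_right hgs' hlogs
      have h4 : (-(Real.log s)⁻¹ * Real.log (lam s)) * Real.log s = - Real.log (lam s) := by
        field_simp
      nlinarith
    calc Real.exp (-a * Real.log s) < Real.exp (Real.log (lam s)) := Real.exp_lt_exp.mpr hkey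
      _ = lam s := Real.exp_log (hpos s (by linarith))
  have hδ : (0:ℝ) < min (Real.exp (-a * Real.log S)) 1 :=
    lt_min (Real.exp_pos _) one_pos
  filter_upwards [Ioo_mem_nhdsGT hδ]
  rintro t ⟨ht0, htδ⟩
  have ht1 : t < 1 := lt_of_lt_of_le htδ (min_le_right _ _)
  have htP : t < Real.exp (-a * Real.log S) := lt_of_lt_of_le htδ (min_le_left _ _)
  have hlogt : Real.log t < 0 := Real.log_neg ht0 ht1
  have hlb : ∀ x ∈ {x : ℝ | 0 ≤ x ∧ lam x ≤ t}, Real.exp (-(Real.log t)/a) ≤ x := by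
    rintro x ⟨hx0, hxt⟩
    have hSx : S ≤ x := by
      by_contra hxS
      push_neg at hxS
      have h1 : lam S ≤ lam x := hmono hx0 hS0 hxS.le
      have h2 : Real.exp (-a * Real.log S) < lam S := hPs S le_rfl
      linarith
    have hx1 : 1 < x := lt_of_lt_of_le hS1 hSx
    have h5 : -a * Real.log x < Real.log t :=
      (Real.lt_log_iff_exp_lt ht0).mpr (lt_of_lt_of_le (hPs x hSx) hxt)
    have h6 : -(Real.log t)/a < Real.log x := by
      rw [div_lt_iff₀ ha]
      nlinarith
    calc Real.exp (-(Real.log t)/a) ≤ Real.exp (Real.log x) := (Real.exp_le_exp.mpr h6.le)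
      _ = x := Real.exp_log (by linarith)
  set mu : ℝ := sInf {x : ℝ | 0 ≤ x ∧ lam x ≤ t} with hmu
  have hmu_ge : Real.exp (-(Real.log t)/a) ≤ mu := le_csInf (aux_ne lam hlim ht0) hlb
  have hlogmu : -(Real.log t)/a ≤ Real.log mu := by
    calc -(Real.log t)/a = Real.log (Real.exp (-(Real.log t)/a)) := (Real.log_exp _).symm
      _ ≤ Real.log mu :=
        (Real.log_le_log_iff (Real.exp_pos _) (lt_of_lt_of_le (Real.exp_pos _) hmu_ge)).mpr hmu_ge
  have hFr : 1 / a ≤ Fr lam t := by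
    have hlog1t : Real.log (1 / t) = - Real.log t := by rw [one_div, Real.log_inv]
    rw [Fr, hlog1t, ← hmu]
    have hLpos : 0 < - Real.log t := by linarith
    have h1 : (- Real.log t)⁻¹ * (-(Real.log t)/a) ≤ (- Real.log t)⁻¹ * Real.log mu :=
      mul_le_mul_of_nonneg_left hlogmu (inv_nonneg.mpr hLpos.le)
    have h2 : (- Real.log t)⁻¹ * (-(Real.log t)/a) = 1 / a := by
      field_simp [hlogt.ne]
    linarith
  exact EReal.coe_le_coe_iff.mpr hFr

/-- The key lemma in Theorem 2.2.4: for a nonincreasing, right-continuous, positive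
function `λ` on `[0,∞)` tending to `0` at infinity, with generalized inverse
`μ(t) = inf {s ≥ 0 : λ(s) ≤ t}`, one has
`liminf_{t→0⁺} log μ(t) / log(1/t) = (limsup_{s→∞} log λ(s) / log(1/s))⁻¹`,
where both sides may take the values `0` and `∞`, with `0⁻¹ = ∞` and `∞⁻¹ = 0`. -/
theorem stmt19 (lam : ℝ → ℝ) (hpos : ∀ s : ℝ, 0 ≤ s → 0 < lam s)
    (hmono : AntitoneOn lam (Set.Ici 0))
    (hrc : ∀ s : ℝ, 0 ≤ s → ContinuousWithinAt lam (Set.Ici s) s)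
    (hlim : Filter.Tendsto lam Filter.atTop (nhds 0)) :
    Filter.liminf
        (fun t : ℝ => ((Real.log (1 / t))⁻¹ : EReal) *
          ((Real.log (sInf {s : ℝ | 0 ≤ s ∧ lam s ≤ t}) : ℝ) : EReal))
        (nhdsWithin (0 : ℝ) (Set.Ioi 0)) =
      einv (Filter.limsup
        (fun s : ℝ => ((Real.log (1 / s))⁻¹ : EReal) * ((Real.log (lam s) : ℝ) : EReal))
        Filter.atTop) := by
  have hfun1 : (fun t : ℝ => ((Real.log (1 / t))⁻¹ : EReal) *
      ((Real.log (sInf {s : ℝ | 0 ≤ s ∧ lam s ≤ t}) : ℝ) : EReal))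
      = fun t => ((Fr lam t : ℝ) : EReal) := by
    funext t
    rw [Fr, EReal.coe_mul, EReal.coe_inv]
  have hfun2 : (fun s : ℝ => ((Real.log (1 / s))⁻¹ : EReal) *
      ((Real.log (lam s) : ℝ) : EReal)) = fun s => ((Gr lam s : ℝ) : EReal) := by
    funext s
    rw [Gr, EReal.coe_mul, EReal.coe_inv]
  rw [hfun1, hfun2]
  set A := Filter.limsup (fun s => ((Gr lam s : ℝ) : EReal)) Filter.atTop with hA
  -- liminf is nonneg
  have hF0 : ∀ᶠ t in nhdsWithin (0:ℝ) (Set.Ioi 0), (0:EReal) ≤ ((Fr lam t : ℝ) : EReal) := by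
    have hl1 : 0 < lam 1 := hpos 1 zero_le_one
    filter_upwards [Ioo_mem_nhdsGT (lt_min hl1 one_pos)]
    rintro t ⟨ht0, htδ⟩
    have ht1 : t < 1 := lt_of_lt_of_le htδ (min_le_right _ _)
    have htl : t < lam 1 := lt_of_lt_of_le htδ (min_le_left _ _)
    have hmu1 : (1:ℝ) ≤ sInf {s : ℝ | 0 ≤ s ∧ lam s ≤ t} := by
      apply le_csInf (aux_ne lam hlim ht0)
      rintro x ⟨hx0, hxt⟩
      by_contra hx1
      push_neg at hx1
      have : lam 1 ≤ lam x := hmono hx0 (Set.mem_Ici.mpr zero_le_one) hx1.le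
      linarith
    have h1 : 0 ≤ Real.log (sInf {s : ℝ | 0 ≤ s ∧ lam s ≤ t}) := Real.log_nonneg hmu1
    have h2 : 0 < Real.log (1/t) := Real.log_pos (by rw [one_div]; exact (one_lt_inv₀ ht0).mpr ht1)
    rw [EReal.coe_nonneg, Fr]
    exact mul_nonneg (inv_nonneg.mpr h2.le) h1
  have hliminf0 : (0:EReal)
      ≤ Filter.liminf (fun t => ((Fr lam t : ℝ) : EReal)) (nhdsWithin (0:ℝ) (Set.Ioi 0)) :=
    le_liminf_of_le (by isBoundedDefault) hF0
  -- A is nonneg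
  have hA0 : (0:EReal) ≤ A := by
    apply le_limsup_of_frequently_le (Eventually.frequently ?_) (by isBoundedDefault)
    filter_upwards [eventually_gt_atTop (1:ℝ), hlim.eventually_lt_const one_pos]
    intro s hs1 hlam1
    have hs0 : (0:ℝ) ≤ s := by linarith
    have h1 : Real.log (lam s) ≤ 0 := Real.log_nonpos (hpos s hs0).le hlam1.le
    have h2 : Real.log (1/s) < 0 := by
      rw [one_div, Real.log_inv]
      linarith [Real.log_pos hs1]
    have h3 : (Real.log (1/s))⁻¹ ≤ 0 := inv_nonpos.mpr h2.le
    rw [EReal.coe_nonneg, Gr]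
    have := mul_nonneg (neg_nonneg.mpr h3) (neg_nonneg.mpr h1)
    rw [neg_mul_neg] at this
    exact this
  by_cases hT : A = ⊤
  · rw [hT]
    have heinv : einv ⊤ = 0 := by simp [einv]
    rw [heinv]
    apply le_antisymm ?_ hliminf0
    apply EReal.le_of_forall_lt_iff_le.mp
    intro z hz
    have hz' : 0 < z := EReal.coe_pos.mp hz
    have := aux_up lam hpos hlim (one_div_pos.mpr hz')
      (by rw [← hA, hT]; exact EReal.coe_lt_top _)
    rwa [one_div_one_div] at this
  by_cases h0 : A = 0
  · rw [h0]
    have heinv : einv 0 = ⊤ := by simp [einv]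
    rw [heinv, EReal.eq_top_iff_forall_lt]
    intro y
    set a := (max y 0 + 1)⁻¹ with ha_def
    have hmax : 0 < max y 0 + 1 := by positivity
    have ha : 0 < a := inv_pos.mpr hmax
    have hlt : A < (a : EReal) := by rw [h0]; exact EReal.coe_pos.mpr ha
    have hdown := aux_down lam hpos hmono hlim ha (hA ▸ hlt)
    have h1a : (1:ℝ)/a = max y 0 + 1 := by
      rw [ha_def, one_div, inv_inv]
    have hy : y < 1/a := by
      rw [h1a]
      have := le_max_left y 0
      linarith
    exact lt_of_lt_of_le (EReal.coe_lt_coe_iff.mpr hy) hdown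
  · have hbot : A ≠ ⊥ := by
      intro hb
      rw [hb] at hA0
      simp at hA0
    have hAr : (A.toReal : EReal) = A := EReal.coe_toReal hT hbot
    set r := A.toReal with hr_def
    have hr0 : 0 ≤ r := by
      rw [← hAr] at hA0
      exact EReal.coe_nonneg.mp hA0
    have hrne : r ≠ 0 := by
      intro hr
      apply h0
      rw [← hAr, hr, EReal.coe_zero]
    have hrpos : 0 < r := lt_of_le_of_ne hr0 (Ne.symm hrne)
    have heinv : einv A = ((r⁻¹ : ℝ) : EReal) := by
      rw [einv, if_neg h0, if_neg hT]
    rw [heinv]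
    apply le_antisymm
    · apply EReal.le_of_forall_lt_iff_le.mp
      intro z hz
      have hz' : r⁻¹ < z := EReal.coe_lt_coe_iff.mp hz
      have hz0 : 0 < z := lt_trans (inv_pos.mpr hrpos) hz'
      have h1 : 1/z < r := by
        rw [div_lt_iff₀ hz0]
        have h2 : r * r⁻¹ < r * z := mul_lt_mul_of_pos_left hz' hrpos
        rw [mul_inv_cancel₀ hrne] at h2
        linarith
      set a := (1/z + r)/2 with ha_def
      have h1z : 0 < 1/z := one_div_pos.mpr hz0
      have ha : 0 < a := by positivity
      have haltr : a < r := by rw [ha_def]; linarith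
      have hup := aux_up lam hpos hlim ha
        (by rw [← hA, ← hAr]; exact EReal.coe_lt_coe_iff.mpr haltr)
      refine le_trans hup (EReal.coe_le_coe_iff.mpr ?_)
      have := one_div_lt_one_div_of_lt h1z (show 1/z < a by rw [ha_def]; linarith)
      rw [one_div_one_div] at this
      linarith
    · apply EReal.ge_of_forall_gt_iff_ge.mp
      intro z hz
      have hz' : z < r⁻¹ := EReal.coe_lt_coe_iff.mp hz
      rcases le_or_gt z 0 with hz0 | hz0
      · exact le_trans (EReal.coe_nonpos.mpr hz0) hliminf0
      · have h1 : r < 1/z := by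
          rw [lt_div_iff₀ hz0]
          have h2 : r * z < r * r⁻¹ := mul_lt_mul_of_pos_left hz' hrpos
          rw [mul_inv_cancel₀ hrne] at h2
          linarith
        set a := (r + 1/z)/2 with ha_def
        have h1z : 0 < 1/z := one_div_pos.mpr hz0
        have ha : 0 < a := by positivity
        have hralt : r < a := by rw [ha_def]; linarith
        have hdown := aux_down lam hpos hmono hlim ha
          (by rw [← hA, ← hAr]; exact EReal.coe_lt_coe_iff.mpr hralt)
        refine le_trans (EReal.coe_le_coe_iff.mpr ?_) hdown
        have := one_div_lt_one_div_of_lt ha (show a < 1/z by rw [ha_def]; linarith)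
        rw [one_div_one_div] at this
        linarith
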